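/- Assume λ is a limit ordinal with cf(λ) > ℵ₀ and 𝒯 is a tree of height λ all of whose levels are finite. Then 𝒯 has a cofinal branch, i.e. a chain B ⊆ 𝒯 that meets the level 𝒯_α for every α < λ. -/

import Mathlib

open Cardinal

/-- **Kurepa's theorem** (Fact 1.7): a tree of height `λ`, where `λ` is a limit ordinal
of uncountable cofinality, all of whose levels are finite (and nonempty) has a cofinal
branch, i.e. a chain meeting every level `𝒯_α` for `α < λ`.

Here a tree is a partial order `T` in which the set of strict predecessors of any
element is well-ordered by `<`; `height t` is the order type of the set of strict
predecessors of `t`. -/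
theorem stmt9 (lam : Ordinal.{0}) (hlim : Order.IsSuccLimit lam) (hcof : ℵ₀ < lam.cof)
    (T : Type) [PartialOrder T]
    (hwo : ∀ t : T, IsWellOrder {s : T // s < t} (fun a b => (a : T) < (b : T)))
    (height : T → Ordinal.{0})
    (hheight : ∀ t : T, height t = @Ordinal.type {s : T // s < t}
      (fun a b => (a : T) < (b : T)) (hwo t))
    (hheight_lt : ∀ t : T, height t < lam)
    (hlevfin : ∀ α < lam, {t : T | height t = α}.Finite)
    (hlevne : ∀ α < lam, {t : T | height t = α}.Nonempty) :
    ∃ B : Set T, IsChain (· ≤ ·) B ∧ ∀ α < lam, ∃ t ∈ B, height t = α := by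
  classical
  -- For `s < t`, the height of `s` equals the `typein` of `s` in the predecessors of `t`.
  have key : ∀ (t s : T) (hst : s < t),
      height s = @Ordinal.typein {x : T // x < t} (fun a b => (a : T) < (b : T)) (hwo t)
        ⟨s, hst⟩ := by
    intro t s hst
    letI := hwo t
    rw [hheight s,
      ← @Ordinal.type_subrel {x : T // x < t} (fun a b => (a : T) < (b : T)) (hwo t) ⟨s, hst⟩]
    letI := hwo s
    refine RelIso.ordinal_type_eq
      ⟨⟨fun x => ⟨⟨x.1, x.2.trans hst⟩, x.2⟩, fun y => ⟨y.1.1, y.2⟩,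
        fun x => rfl, fun y => rfl⟩, Iff.rfl⟩
  -- heights are strictly monotone
  have hmono : ∀ s t : T, s < t → height s < height t := by
    intro s t hst
    rw [key t s hst, hheight t]
    exact Ordinal.typein_lt_type _ _
  -- unique element of each height below an element
  have exu : ∀ (t : T) (α : Ordinal), α ≤ height t → ∃! s : T, s ≤ t ∧ height s = α := by
    intro t α hα
    rcases eq_or_lt_of_le hα with heq | hlt
    · refine ⟨t, ⟨le_rfl, heq.symm⟩, ?_⟩
      rintro s ⟨hs1, hs2⟩
      rcases eq_or_lt_of_le hs1 with h | h
      · exact h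
      · exact absurd (hs2 ▸ hmono s t h) (heq ▸ lt_irrefl α)
    · letI := hwo t
      rw [hheight t] at hlt
      obtain ⟨a, ha⟩ := Ordinal.typein_surj (fun a b : {x : T // x < t} => (a : T) < (b : T)) hlt
      refine ⟨a.1, ⟨a.2.le, by rw [key t a.1 a.2]; exact ha⟩, ?_⟩
      rintro s ⟨hs1, hs2⟩
      rcases eq_or_lt_of_le hs1 with h | h
      · subst h
        exact absurd hs2 (by rw [hheight s]; exact hlt.ne')
      · have : (⟨s, h⟩ : {x : T // x < t}) = a := by
          apply (Ordinal.typein_injective (fun a b : {x : T // x < t} => (a : T) < (b : T)))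
          rw [← key t s h, hs2, ha]
        exact congrArg Subtype.val this
  -- the projection function
  have exP : ∀ (t : T) (α : Ordinal), ∃ s : T, α ≤ height t → s ≤ t ∧ height s = α := by
    intro t α
    by_cases h : α ≤ height t
    · obtain ⟨s, hs⟩ := (exu t α h).exists
      exact ⟨s, fun _ => hs⟩
    · exact ⟨t, fun h' => absurd h' h⟩
  choose pproj hpproj using exP
  have uniq : ∀ (t : T) (α : Ordinal), α ≤ height t → ∀ s : T, s ≤ t → height s = α →
      s = pproj t α := by
    intro t α h s hs1 hs2
    exact (exu t α h).unique ⟨hs1, hs2⟩ (hpproj t α h)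
  have comp : ∀ (t : T) (α α' : Ordinal), α ≤ α' → α' ≤ height t →
      pproj (pproj t α') α = pproj t α := by
    intro t α α' hαα' h'
    have h2 : α ≤ height (pproj t α') := by rw [(hpproj t α' h').2]; exact hαα'
    exact uniq t α (hαα'.trans h') _ ((hpproj _ α h2).1.trans (hpproj t α' h').1)
      (hpproj _ α h2).2
  -- index type
  let I := {β : Ordinal // β < lam}
  haveI : Nonempty I := ⟨⟨0, hlim.pos⟩⟩
  let U : Ultrafilter I := Ultrafilter.of Filter.atTop
  have hU : ∀ α : I, Set.Ici α ∈ U :=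
    fun α => Ultrafilter.of_le Filter.atTop (Filter.mem_atTop α)
  -- choice of elements at each level
  have hg : ∀ β : I, height ((hlevne β.1 β.2).some) = β.1 := fun β => (hlevne β.1 β.2).some_mem
  set g : I → T := fun β => (hlevne β.1 β.2).some with hgdef
  -- for each level, the projections of `g β` concentrate on one element
  have exs : ∀ α : I, ∃ t : T, height t = α.1 ∧ {β : I | pproj (g β) α.1 = t} ∈ U := by
    intro α
    have hsub : Set.Ici α ⊆ ⋃ t ∈ {t : T | height t = α.1}, {β : I | pproj (g β) α.1 = t} := by
      intro β hβ
      have hle : α.1 ≤ height (g β) := by rw [hg β]; exact hβ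
      exact Set.mem_biUnion (hpproj (g β) α.1 hle).2 rfl
    have hmem : (⋃ t ∈ {t : T | height t = α.1}, {β : I | pproj (g β) α.1 = t}) ∈ U :=
      Filter.mem_of_superset (hU α) hsub
    obtain ⟨t, ht, htU⟩ := (Ultrafilter.finite_biUnion_mem_iff (hlevfin α.1 α.2)).mp hmem
    exact ⟨t, ht, htU⟩
  choose s hs1 hs2 using exs
  -- monotonicity of the branch
  have smono : ∀ α α' : I, α.1 ≤ α'.1 → s α ≤ s α' := by
    intro α α' hαα'
    have hA : ({β : I | pproj (g β) α.1 = s α} ∩ {β : I | pproj (g β) α'.1 = s α'} ∩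
        Set.Ici α') ∈ U := Filter.inter_mem (Filter.inter_mem (hs2 α) (hs2 α')) (hU α')
    obtain ⟨β, ⟨hb1, hb2⟩, hb3⟩ := Ultrafilter.nonempty_of_mem hA
    have hle' : α'.1 ≤ height (g β) := by rw [hg β]; exact hb3
    have : pproj (g β) α.1 = pproj (s α') α.1 := by
      rw [← comp (g β) α.1 α'.1 hαα' hle', hb2]
    rw [hb1] at this
    have h2 : α.1 ≤ height (s α') := by rw [hs1 α']; exact hαα'
    rw [this]
    exact (hpproj (s α') α.1 h2).1
  refine ⟨Set.range s, ?_, ?_⟩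
  · rintro _ ⟨α, rfl⟩ _ ⟨α', rfl⟩ _
    rcases le_total α.1 α'.1 with h | h
    · exact Or.inl (smono α α' h)
    · exact Or.inr (smono α' α h)
  · intro α hα
    exact ⟨s ⟨α, hα⟩, Set.mem_range_self _, hs1 ⟨α, hα⟩⟩
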